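/- Let κ be an infinite cardinal, s ∈ 𝕊_κ, and let m : κ⁺ → ℤ be a ρ₂-modifier (a continuous, eventually constant ℤ-valued function) that is legal for s, meaning (s + m)(ξ) ≥ 0 for all ξ < |s|. Then s + m (the pointwise sum restricted to the domain of s) belongs to 𝕊_κ. -/

import Mathlib

open Cardinal

universe u

/-- The order type of a set of ordinals (one universe up). -/
noncomputable def otp (s : Set Ordinal.{u}) : Ordinal.{u + 1} :=
  @Ordinal.type s (Subrel ((· < ·) : Ordinal.{u} → Ordinal.{u} → Prop) (· ∈ s)) inferInstance

/-- `C` is unbounded in (cofinal below) `x`. -/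
def UnbddBelow (C : Set Ordinal.{u}) (x : Ordinal.{u}) : Prop :=
  ∀ β < x, ∃ α ∈ C, β < α ∧ α < x

/-- The set `Cₙᵗ = {α < l : t α ≤ n}`. -/
def Ct (t : Ordinal.{u} → ℕ) (l : Ordinal.{u}) (n : ℕ) : Set Ordinal.{u} :=
  {α | α < l ∧ t α ≤ n}

/-- Membership in `𝕊_κ`: `t` has domain a successor ordinal `l < κ⁺`, each `Cₙᵗ` is
closed, at limit ordinals `t` takes the least value `n` with `Cₙᵗ` unbounded below, and
every interval disjoint from `Cₙ₋₁ᵗ` meets `Cₙᵗ` in a set of order type `< κ·ω`. -/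
def InSkappa (κ : Cardinal.{u}) (l : Ordinal.{u}) (t : Ordinal.{u} → ℕ) : Prop :=
  (∃ δ, l = δ + 1) ∧ l < (Order.succ κ).ord ∧
  (∀ n : ℕ, ∀ x < l, Order.IsSuccLimit x → UnbddBelow (Ct t l n) x → t x ≤ n) ∧
  (∀ x < l, Order.IsSuccLimit x →
    UnbddBelow (Ct t l (t x)) x ∧ ∀ m : ℕ, UnbddBelow (Ct t l m) x → t x ≤ m) ∧
  (∀ n : ℕ, ∀ I : Set Ordinal.{u}, I ⊆ Set.Iio l → I.OrdConnected →
    (∀ x ∈ I, n ≤ t x) →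
    otp (Ct t l n ∩ I) < Ordinal.lift.{u + 1} (κ.ord * Ordinal.omega0))

/-! ### Auxiliary lemmas -/

lemma otp_mono {A B : Set Ordinal.{u}} (h : A ⊆ B) : otp A ≤ otp B :=
  RelEmbedding.ordinal_type_le ⟨⟨Set.inclusion h, Set.inclusion_injective h⟩, Iff.rfl⟩

lemma otp_empty : otp (∅ : Set Ordinal.{u}) = 0 :=
  Ordinal.type_eq_zero_of_empty _

lemma otp_union_le {A B : Set Ordinal.{u}} (h : ∀ a ∈ A, ∀ b ∈ B, a < b) :
    otp (A ∪ B) ≤ otp A + otp B := by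
  classical
  rw [otp, otp, otp, ← Ordinal.type_sum_lex]
  haveI : IsTrichotomous ↥(A ∪ B)
      (Subrel ((· < ·) : Ordinal.{u} → Ordinal.{u} → Prop) (· ∈ A ∪ B)) := by
    constructor
    intro a b
    rcases lt_trichotomy a.1 b.1 with h' | h' | h'
    · intro h1 _; exact absurd h' h1
    · intro _ _; exact Subtype.ext h'
    · intro _ h2; exact absurd h' h2
  haveI : IsAsymm _ (Sum.Lex (Subrel ((· < ·) : Ordinal.{u} → Ordinal.{u} → Prop) (· ∈ A))
      (Subrel ((· < ·) : Ordinal.{u} → Ordinal.{u} → Prop) (· ∈ B))) := by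
    constructor
    intro a b h1 h2
    exact _root_.irrefl a (_root_.trans h1 h2)
  refine RelEmbedding.ordinal_type_le (RelEmbedding.ofMonotone
    (fun x => if hx : x.1 ∈ A then Sum.inl ⟨x.1, hx⟩ else Sum.inr ⟨x.1, x.2.resolve_left hx⟩) ?_)
  intro a b hab
  have hab' : a.1 < b.1 := hab
  by_cases ha : a.1 ∈ A <;> by_cases hb : b.1 ∈ A
  · simp only [dif_pos ha, dif_pos hb]
    exact Sum.Lex.inl hab'
  · simp only [dif_pos ha, dif_neg hb]
    exact Sum.Lex.sep _ _
  · exact absurd (h b.1 hb a.1 (a.2.resolve_left ha)) (not_lt_of_gt hab')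
  · simp only [dif_neg ha, dif_neg hb]
    exact Sum.Lex.inr hab'

lemma add_lt_mul_omega0 {c x y : Ordinal.{v}} (hc : 0 < c)
    (hx : x < c * Ordinal.omega0) (hy : y < c * Ordinal.omega0) :
    x + y < c * Ordinal.omega0 := by
  rw [Ordinal.lt_mul_iff_of_isSuccLimit Ordinal.isSuccLimit_omega0] at hx hy ⊢
  obtain ⟨a, ha, hxa⟩ := hx
  obtain ⟨b, hb, hyb⟩ := hy
  refine ⟨a + b, ?_, ?_⟩
  · obtain ⟨na, rfl⟩ := Ordinal.lt_omega0.1 ha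
    obtain ⟨nb, rfl⟩ := Ordinal.lt_omega0.1 hb
    rw [← Nat.cast_add]
    exact Ordinal.nat_lt_omega0 _
  · calc x + y < x + c * b := add_lt_add_right hyb x
      _ ≤ c * a + c * b := add_le_add_left hxa.le _
      _ = c * (a + b) := (mul_add c a b).symm

/-- A continuous function changes value only boundedly often below any `γ < O`. -/
lemma finite_changes (m : Ordinal.{u} → ℤ) (O : Ordinal.{u})
    (hO : ∀ x < O, Order.IsSuccLimit x → ∃ β < x, ∀ ξ, β ≤ ξ → ξ ≤ x → m ξ = m x) :
    ∀ γ < O, {ξ | ξ < γ ∧ m ξ ≠ m (ξ + 1)}.Finite := by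
  intro γ
  induction γ using Ordinal.limitRecOn with
  | zero =>
    intro _
    refine Set.Finite.subset Set.finite_empty ?_
    rintro ξ ⟨h, -⟩
    exact absurd h (by simp)
  | add_one δ ih =>
    intro h
    have hδ : δ < O := (Order.lt_succ δ).trans h
    refine Set.Finite.subset ((ih hδ).union (Set.finite_singleton δ)) ?_
    rintro ξ ⟨hξ, hm⟩
    have hξδ : ξ ≤ δ := Order.lt_succ_iff.1 hξ
    rcases lt_or_eq_of_le hξδ with h' | h'
    · exact Or.inl ⟨h', hm⟩
    · exact Or.inr (by simp [h'])
  | limit δ hlim ih =>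
    intro h
    obtain ⟨β, hβδ, hβ⟩ := hO δ h hlim
    refine Set.Finite.subset (ih β hβδ (hβδ.trans h)) ?_
    rintro ξ ⟨hξδ, hm⟩
    refine ⟨?_, hm⟩
    by_contra hβξ
    push_neg at hβξ
    have h1 : m ξ = m δ := hβ ξ hβξ hξδ.le
    have hsucc : ξ + 1 ≤ δ := by
      rw [Ordinal.add_one_eq_succ]
      exact (hlim.succ_lt hξδ).le
    have h2 : m (ξ + 1) = m δ := hβ (ξ + 1) (hβξ.trans (by simp)) hsucc
    exact hm (h1.trans h2.symm)

/-- On a piece with no change points, `m` is constant. -/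
lemma const_piece (m : Ordinal.{u} → ℤ) (O l : Ordinal.{u}) (hl : l < O)
    (hO : ∀ x < O, Order.IsSuccLimit x → ∃ β < x, ∀ ξ, β ≤ ξ → ξ ≤ x → m ξ = m x)
    (a : Ordinal.{u}) :
    ∀ ξ, a ≤ ξ → ξ < l → (∀ η, a ≤ η → η < ξ → m η = m (η + 1)) → m ξ = m a := by
  intro ξ
  induction ξ using Ordinal.limitRecOn with
  | zero =>
    intro ha _ _
    rw [nonpos_iff_eq_zero.1 ha]
  | add_one δ ih =>
    intro ha hδl hne
    rcases eq_or_lt_of_le ha with he | hlt'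
    · rw [← he]
    · have haδ : a ≤ δ := Order.lt_succ_iff.1 hlt'
      have hδl' : δ < l := (Order.lt_succ δ).trans hδl
      have h1 : m δ = m a := ih haδ hδl' (fun η u v => hne η u (v.trans (Order.lt_succ δ)))
      have h2 : m δ = m (δ + 1) := hne δ haδ (Order.lt_succ δ)
      rw [← h2, h1]
  | limit δ hlim ih =>
    intro ha hδl hne
    rcases eq_or_lt_of_le ha with he | hlt'
    · rw [← he]
    · obtain ⟨β, hβδ, hβ⟩ := hO δ (hδl.trans hl) hlim
      have hηδ : max a β < δ := max_lt hlt' hβδ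
      have h1 : m (max a β) = m a :=
        ih (max a β) hηδ (le_max_left _ _) (hηδ.trans hδl)
          (fun η' u v => hne η' u (v.trans hηδ))
      have h2 : m (max a β) = m δ := hβ (max a β) (le_max_right _ _) hηδ.le
      rw [← h2, h1]

/-- The key interval lemma: the interval condition for `s + m`, by induction on the
number of change points of `m` inside the interval. -/
lemma key5 (κ : Cardinal.{u}) (hκ : ℵ₀ ≤ κ) (l : Ordinal.{u}) (s : Ordinal.{u} → ℕ)
    (m : Ordinal.{u} → ℤ)
    (hs5 : ∀ k : ℕ, ∀ J : Set Ordinal.{u}, J ⊆ Set.Iio l → J.OrdConnected →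
      (∀ x ∈ J, k ≤ s x) →
      otp (Ct s l k ∩ J) < Ordinal.lift.{u + 1} (κ.ord * Ordinal.omega0))
    (S : Set Ordinal.{u}) (hSfin : S.Finite)
    (hconst : ∀ a ξ, a ≤ ξ → ξ < l → (∀ η, a ≤ η → η < ξ → η ∉ S) → m ξ = m a)
    (n : ℕ) (N : ℕ) :
    ∀ I : Set Ordinal.{u}, I ⊆ Set.Iio l → I.OrdConnected →
      (∀ x ∈ I, (n : ℤ) ≤ (s x : ℤ) + m x) →
      ({ξ ∈ S ∩ I | ∃ y ∈ I, ξ < y}).ncard ≤ N →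
      otp (Ct (fun ξ => ((s ξ : ℤ) + m ξ).toNat) l n ∩ I) <
        Ordinal.lift.{u + 1} (κ.ord * Ordinal.omega0) := by
  have hB0 : 0 < Ordinal.lift.{u + 1} (κ.ord * Ordinal.omega0) := by
    have hpos : 0 < κ.ord * Ordinal.omega0 :=
      mul_pos (lt_of_lt_of_le Ordinal.omega0_pos (Cardinal.omega0_le_ord.2 hκ))
        Ordinal.omega0_pos
    simpa using Ordinal.lift_lt.{u + 1}.2 hpos
  induction N with
  | zero =>
    intro I hIl hIc hnI hcard
    have hS'fin : ({ξ ∈ S ∩ I | ∃ y ∈ I, ξ < y}).Finite :=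
      hSfin.subset (by rintro ξ ⟨⟨h1, -⟩, -⟩; exact h1)
    have hS' : {ξ ∈ S ∩ I | ∃ y ∈ I, ξ < y} = ∅ :=
      (Set.ncard_eq_zero hS'fin).1 (Nat.le_zero.1 hcard)
    rcases Set.eq_empty_or_nonempty I with hI | hIne
    · have hE : Ct (fun ξ => ((s ξ : ℤ) + m ξ).toNat) l n ∩ I = ∅ := by
        rw [hI, Set.inter_empty]
      rw [hE, otp_empty]
      exact hB0
    · set a := sInf I with ha
      have haI : a ∈ I := csInf_mem hIne
      have hamin : ∀ x ∈ I, a ≤ x := fun x hx => csInf_le' hx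
      have hmconst : ∀ ξ ∈ I, m ξ = m a := by
        intro ξ hξ
        rcases eq_or_lt_of_le (hamin ξ hξ) with he | hlt'
        · rw [← he]
        · refine hconst a ξ (hamin ξ hξ) (hIl hξ) ?_
          intro η hηa hηξ hηS
          have hηI : η ∈ I := hIc.out haI hξ ⟨hηa, hηξ.le⟩
          have : η ∈ ({ξ ∈ S ∩ I | ∃ y ∈ I, ξ < y} : Set _) := ⟨⟨hηS, hηI⟩, ξ, hξ, hηξ⟩
          rw [hS'] at this
          exact this
      by_cases hcn : 0 ≤ (n : ℤ) - m a
      · set k := ((n : ℤ) - m a).toNat with hkdef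
        have hk : (k : ℤ) = (n : ℤ) - m a := Int.toNat_of_nonneg hcn
        have hEq : Ct (fun ξ => ((s ξ : ℤ) + m ξ).toNat) l n ∩ I = Ct s l k ∩ I := by
          ext ξ
          simp only [Ct, Set.mem_inter_iff, Set.mem_setOf_eq]
          constructor
          · rintro ⟨⟨h1, h2⟩, h3⟩
            have h2' : (s ξ : ℤ) + m ξ ≤ (n : ℤ) := Int.toNat_le.1 h2
            have hm := hmconst ξ h3
            exact ⟨⟨h1, by omega⟩, h3⟩
          · rintro ⟨⟨h1, h2⟩, h3⟩
            have hm := hmconst ξ h3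
            refine ⟨⟨h1, ?_⟩, h3⟩
            rw [Int.toNat_le]
            omega
        rw [hEq]
        refine hs5 k I hIl hIc ?_
        intro x hx
        have h1 := hnI x hx
        have hm := hmconst x hx
        omega
      · have hE : Ct (fun ξ => ((s ξ : ℤ) + m ξ).toNat) l n ∩ I = ∅ := by
          rw [Set.eq_empty_iff_forall_notMem]
          rintro ξ ⟨⟨h1, h2⟩, h3⟩
          have h2' : (s ξ : ℤ) + m ξ ≤ (n : ℤ) := Int.toNat_le.1 h2
          have hm := hmconst ξ h3
          omega
        rw [hE, otp_empty]
        exact hB0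
  | succ N ih =>
    intro I hIl hIc hnI hcard
    rcases Set.eq_empty_or_nonempty {ξ ∈ S ∩ I | ∃ y ∈ I, ξ < y} with hS' | hS'
    · exact ih I hIl hIc hnI (by rw [hS', Set.ncard_empty]; omega)
    · obtain ⟨p, ⟨⟨hpS, hpI⟩, y, hyI, hpy⟩⟩ := hS'
      have hS'fin : ({ξ ∈ S ∩ I | ∃ y ∈ I, ξ < y}).Finite :=
        hSfin.subset (by rintro ξ ⟨⟨h1, -⟩, -⟩; exact h1)
      have hpmem : p ∈ {ξ ∈ S ∩ I | ∃ y ∈ I, ξ < y} := ⟨⟨hpS, hpI⟩, y, hyI, hpy⟩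
      set I₁ := I ∩ Set.Iic p with hI₁
      set I₂ := I ∩ Set.Ioi p with hI₂
      have hsplit : Ct (fun ξ => ((s ξ : ℤ) + m ξ).toNat) l n ∩ I =
          (Ct (fun ξ => ((s ξ : ℤ) + m ξ).toNat) l n ∩ I₁) ∪
          (Ct (fun ξ => ((s ξ : ℤ) + m ξ).toNat) l n ∩ I₂) := by
        rw [hI₁, hI₂, ← Set.inter_union_distrib_left, ← Set.inter_union_distrib_left,
          Set.Iic_union_Ioi, Set.inter_univ]
      have hcard₁ : ({ξ ∈ S ∩ I₁ | ∃ y ∈ I₁, ξ < y}).ncard ≤ N := by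
        have hsub : {ξ ∈ S ∩ I₁ | ∃ y ∈ I₁, ξ < y} ⊆ {ξ ∈ S ∩ I | ∃ y ∈ I, ξ < y} \ {p} := by
          rintro ξ ⟨⟨hξS, hξI, hξp⟩, y', ⟨hy'I, hy'p⟩, hlt⟩
          refine ⟨⟨⟨hξS, hξI⟩, y', hy'I, hlt⟩, ?_⟩
          simp only [Set.mem_singleton_iff]
          intro h
          subst h
          exact absurd (hlt.trans_le hy'p) (lt_irrefl ξ)
        calc ({ξ ∈ S ∩ I₁ | ∃ y ∈ I₁, ξ < y}).ncard
            ≤ ({ξ ∈ S ∩ I | ∃ y ∈ I, ξ < y} \ {p}).ncard :=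
              Set.ncard_le_ncard hsub hS'fin.diff
          _ = ({ξ ∈ S ∩ I | ∃ y ∈ I, ξ < y}).ncard - 1 :=
              Set.ncard_diff_singleton_of_mem hpmem
          _ ≤ N := by omega
      have hcard₂ : ({ξ ∈ S ∩ I₂ | ∃ y ∈ I₂, ξ < y}).ncard ≤ N := by
        have hsub : {ξ ∈ S ∩ I₂ | ∃ y ∈ I₂, ξ < y} ⊆ {ξ ∈ S ∩ I | ∃ y ∈ I, ξ < y} \ {p} := by
          rintro ξ ⟨⟨hξS, hξI, hξp⟩, y', ⟨hy'I, hy'p⟩, hlt⟩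
          refine ⟨⟨⟨hξS, hξI⟩, y', hy'I, hlt⟩, ?_⟩
          simp only [Set.mem_singleton_iff]
          intro h
          subst h
          exact absurd hξp (lt_irrefl ξ)
        calc ({ξ ∈ S ∩ I₂ | ∃ y ∈ I₂, ξ < y}).ncard
            ≤ ({ξ ∈ S ∩ I | ∃ y ∈ I, ξ < y} \ {p}).ncard :=
              Set.ncard_le_ncard hsub hS'fin.diff
          _ = ({ξ ∈ S ∩ I | ∃ y ∈ I, ξ < y}).ncard - 1 :=
              Set.ncard_diff_singleton_of_mem hpmem
          _ ≤ N := by omega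
      have h₁ := ih I₁ ((Set.inter_subset_left).trans hIl) (hIc.inter Set.ordConnected_Iic)
        (fun x hx => hnI x hx.1) hcard₁
      have h₂ := ih I₂ ((Set.inter_subset_left).trans hIl) (hIc.inter Set.ordConnected_Ioi)
        (fun x hx => hnI x hx.1) hcard₂
      have hord : ∀ x ∈ Ct (fun ξ => ((s ξ : ℤ) + m ξ).toNat) l n ∩ I₁,
          ∀ z ∈ Ct (fun ξ => ((s ξ : ℤ) + m ξ).toNat) l n ∩ I₂, x < z := by
        rintro x ⟨-, -, hx⟩ z ⟨-, -, hz⟩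
        exact lt_of_le_of_lt hx hz
      calc otp (Ct (fun ξ => ((s ξ : ℤ) + m ξ).toNat) l n ∩ I)
          ≤ otp (Ct (fun ξ => ((s ξ : ℤ) + m ξ).toNat) l n ∩ I₁) +
            otp (Ct (fun ξ => ((s ξ : ℤ) + m ξ).toNat) l n ∩ I₂) := by
            rw [hsplit]; exact otp_union_le hord
        _ < Ordinal.lift.{u + 1} (κ.ord * Ordinal.omega0) := by
            rw [Ordinal.lift_mul, Ordinal.lift_omega0] at h₁ h₂ ⊢
            refine add_lt_mul_omega0 ?_ h₁ h₂
            have hpos : (0 : Ordinal.{u}) < κ.ord :=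
              lt_of_lt_of_le Ordinal.omega0_pos (Cardinal.omega0_le_ord.2 hκ)
            simpa using Ordinal.lift_lt.{u + 1}.2 hpos

/-- If `s ∈ 𝕊_κ` and `m` is a `ρ₂`-modifier (continuous, eventually constant,
ℤ-valued) legal for `s`, then `s + m` belongs to `𝕊_κ`. -/
theorem stmt15 (κ : Cardinal.{u}) (hκ : ℵ₀ ≤ κ) (l : Ordinal.{u}) (s : Ordinal.{u} → ℕ)
    (hs : InSkappa κ l s) (m : Ordinal.{u} → ℤ)
    (hcont : ∀ x < (Order.succ κ).ord, Order.IsSuccLimit x →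
      ∃ β < x, ∀ ξ, β ≤ ξ → ξ ≤ x → m ξ = m x)
    (hconst : ∃ ζ < (Order.succ κ).ord, ∀ ξ, ζ ≤ ξ → ξ < (Order.succ κ).ord → m ξ = m ζ)
    (hlegal : ∀ ξ < l, 0 ≤ (s ξ : ℤ) + m ξ) :
    InSkappa κ l (fun ξ => ((s ξ : ℤ) + m ξ).toNat) := by
  obtain ⟨h1, h2, hs3, hs4, hs5⟩ := hs
  -- membership descriptions
  have hmemt : ∀ (n : ℕ) (α : Ordinal.{u}),
      α ∈ Ct (fun ξ => ((s ξ : ℤ) + m ξ).toNat) l n ↔ α < l ∧ (s α : ℤ) + m α ≤ (n : ℤ) := by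
    intro n α
    simp only [Ct, Set.mem_setOf_eq, Int.toNat_le]
  have hmems : ∀ (k : ℕ) (α : Ordinal.{u}),
      α ∈ Ct s l k ↔ α < l ∧ (s α : ℤ) ≤ (k : ℤ) := by
    intro k α
    simp only [Ct, Set.mem_setOf_eq, Nat.cast_le]
  -- forward transfer at limits
  have trans1 : ∀ (n : ℕ) (x : Ordinal.{u}), x < l → Order.IsSuccLimit x →
      UnbddBelow (Ct (fun ξ => ((s ξ : ℤ) + m ξ).toNat) l n) x →
      0 ≤ (n : ℤ) - m x ∧ UnbddBelow (Ct s l ((n : ℤ) - m x).toNat) x := by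
    intro n x hxl hxlim hun
    obtain ⟨β, hβx, hβ⟩ := hcont x (hxl.trans h2) hxlim
    have get : ∀ β' < x, ∃ α, β' < α ∧ α < x ∧ α < l ∧ (s α : ℤ) ≤ (n : ℤ) - m x := by
      intro β' hβ'
      obtain ⟨α, hαmem, hlt1, hlt2⟩ := hun (max β β') (max_lt hβx hβ')
      have hbα : β ≤ α := (le_max_left β β').trans hlt1.le
      obtain ⟨hαl, hαn⟩ := (hmemt n α).1 hαmem
      have hm : m α = m x := hβ α hbα hlt2.le
      exact ⟨α, (le_max_right β β').trans_lt hlt1, hlt2, hαl, by omega⟩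
    have hnn : 0 ≤ (n : ℤ) - m x := by
      obtain ⟨α, -, -, -, hα⟩ := get β hβx
      have : (0 : ℤ) ≤ (s α : ℤ) := Int.ofNat_nonneg _
      omega
    refine ⟨hnn, ?_⟩
    intro β' hβ'
    obtain ⟨α, hα1, hα2, hα3, hα4⟩ := get β' hβ'
    refine ⟨α, (hmems _ α).2 ⟨hα3, ?_⟩, hα1, hα2⟩
    rw [Int.toNat_of_nonneg hnn]
    exact hα4
  -- backward transfer at limits
  have trans2 : ∀ (k : ℕ) (x : Ordinal.{u}), x < l → Order.IsSuccLimit x →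
      UnbddBelow (Ct s l k) x → ∀ n : ℕ, (k : ℤ) + m x ≤ (n : ℤ) →
      UnbddBelow (Ct (fun ξ => ((s ξ : ℤ) + m ξ).toNat) l n) x := by
    intro k x hxl hxlim hun n hkn β' hβ'
    obtain ⟨β, hβx, hβ⟩ := hcont x (hxl.trans h2) hxlim
    obtain ⟨α, hαmem, hlt1, hlt2⟩ := hun (max β β') (max_lt hβx hβ')
    obtain ⟨hαl, hαk⟩ := (hmems k α).1 hαmem
    have hm : m α = m x := hβ α ((le_max_left β β').trans hlt1.le) hlt2.le
    refine ⟨α, (hmemt n α).2 ⟨hαl, by omega⟩, (le_max_right β β').trans_lt hlt1, hlt2⟩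
  have cond3 : ∀ n : ℕ, ∀ x < l, Order.IsSuccLimit x →
      UnbddBelow (Ct (fun ξ => ((s ξ : ℤ) + m ξ).toNat) l n) x →
      ((s x : ℤ) + m x).toNat ≤ n := by
    intro n x hxl hxlim hun
    obtain ⟨hnn, hu⟩ := trans1 n x hxl hxlim hun
    have hsx : s x ≤ ((n : ℤ) - m x).toNat := (hs4 x hxl hxlim).2 _ hu
    have hsx' : (s x : ℤ) ≤ (n : ℤ) - m x := by
      have := Int.toNat_of_nonneg hnn
      exact_mod_cast (Nat.cast_le.2 hsx).trans_eq (by exact_mod_cast this)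
    rw [Int.toNat_le]
    omega
  refine ⟨h1, h2, cond3, ?_, ?_⟩
  · intro x hxl hxlim
    refine ⟨?_, fun n hn => cond3 n x hxl hxlim hn⟩
    have hleg := hlegal x hxl
    refine trans2 (s x) x hxl hxlim (hs4 x hxl hxlim).1 (((s x : ℤ) + m x).toNat) ?_
    rw [Int.toNat_of_nonneg hleg]
  · intro n I hIl hIc hnt
    have hSfin : {ξ | ξ < l ∧ m ξ ≠ m (ξ + 1)}.Finite :=
      finite_changes m ((Order.succ κ).ord) hcont l h2
    have hconst' : ∀ a ξ, a ≤ ξ → ξ < l →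
        (∀ η, a ≤ η → η < ξ → η ∉ {ξ | ξ < l ∧ m ξ ≠ m (ξ + 1)}) → m ξ = m a := by
      intro a ξ ha hξl hne
      refine const_piece m ((Order.succ κ).ord) l h2 hcont a ξ ha hξl ?_
      intro η hηa hηξ
      by_contra hη
      exact hne η hηa hηξ ⟨hηξ.trans hξl, hη⟩
    refine key5 κ hκ l s m hs5 _ hSfin hconst' n
      ({ξ ∈ {ξ | ξ < l ∧ m ξ ≠ m (ξ + 1)} ∩ I | ∃ y ∈ I, ξ < y}).ncard I hIl hIc ?_ le_rfl
    intro x hx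
    have hleg := hlegal x (hIl hx)
    have := hnt x hx
    rwa [Int.le_toNat hleg] at this
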